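/- arXiv:1010.0423 — 3 statements merged into one kernel-verified Lean document; each statement's English description precedes it below -/
import Mathlib

section
/- Let (X, φ) be a Morita equivalence between the Busby-Smith twisted actions (A, S, α, u) and (B, S, β, v). Then for all s, t ∈ S the closed span of α_s(_A⟨X_{s*}, X_t⟩) equals A_{st}. -/
/-! ### Right inner-product modules over a C*-algebra -/

/-- A right inner-product `B`-module: a complex vector space `X` with a right
`B`-action and a `B`-valued inner product, linear in the second variable.
Positivity `0 ≤ ⟨x,x⟩_B` is expressed as `⟨x,x⟩_B = c* c` for some `c`,
which is equivalent in a C*-algebra. -/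
structure RightInnerModule (B X : Type*) [CStarAlgebra B]
    [AddCommGroup X] [Module ℂ X] where
  /-- the right action `x · b` -/
  smul : X → B → X
  add_smul' : ∀ x y b, smul (x + y) b = smul x b + smul y b
  smul_add' : ∀ x b c, smul x (b + c) = smul x b + smul x c
  smul_assoc' : ∀ x b c, smul (smul x b) c = smul x (b * c)
  smul_comm_left : ∀ (l : ℂ) x b, smul (l • x) b = l • smul x b
  smul_comm_right : ∀ (l : ℂ) x b, smul x (l • b) = l • smul x b
  /-- the `B`-valued inner product `⟨x, y⟩_B` -/
  inner : X → X → B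
  inner_add_right : ∀ x y z, inner x (y + z) = inner x y + inner x z
  inner_smulC_right : ∀ (l : ℂ) x y, inner x (l • y) = l • inner x y
  inner_smul_right : ∀ x y b, inner x (smul y b) = inner x y * b
  inner_star : ∀ x y, star (inner x y) = inner y x
  inner_self_nonneg : ∀ x, ∃ c, inner x x = star c * c
  inner_self_eq_zero : ∀ x, inner x x = 0 → x = 0

/-- The norm `‖x‖_B = ‖⟨x,x⟩_B‖^(1/2)` on a right inner-product module. -/
noncomputable def RightInnerModule.normX {B X : Type*} [CStarAlgebra B]
    [AddCommGroup X] [Module ℂ X] (m : RightInnerModule B X) (x : X) : ℝ :=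
  Real.sqrt ‖m.inner x x‖

/-! ### Hilbert bimodules -/

/-- A Hilbert `A`–`B` bimodule: an `A`–`B` bimodule which is a left
inner-product `A`-module (inner product `_A⟨·,·⟩`, linear in the first
variable) and a right inner-product `B`-module (inner product `⟨·,·⟩_B`,
linear in the second variable), satisfying the compatibility condition
`_A⟨x,y⟩ · z = x · ⟨y,z⟩_B`. -/
structure HilbertBimodule (A B X : Type*) [CStarAlgebra A] [CStarAlgebra B]
    [AddCommGroup X] [Module ℂ X] where
  /-- the underlying right inner-product `B`-module structure -/
  right : RightInnerModule B X
  /-- the left action `a · x` -/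
  lsmul : A → X → X
  lsmul_add : ∀ a x y, lsmul a (x + y) = lsmul a x + lsmul a y
  add_lsmul : ∀ a b x, lsmul (a + b) x = lsmul a x + lsmul b x
  lsmul_assoc : ∀ a b x, lsmul a (lsmul b x) = lsmul (a * b) x
  lsmul_comm_left : ∀ (l : ℂ) a x, lsmul (l • a) x = l • lsmul a x
  lsmul_comm_right : ∀ (l : ℂ) a x, lsmul a (l • x) = l • lsmul a x
  /-- the `A`-valued inner product `_A⟨x, y⟩` -/
  linner : X → X → A
  linner_add_left : ∀ x y z, linner (x + y) z = linner x z + linner y z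
  linner_smulC_left : ∀ (l : ℂ) x y, linner (l • x) y = l • linner x y
  linner_lsmul_left : ∀ a x y, linner (lsmul a x) y = a * linner x y
  linner_star : ∀ x y, star (linner x y) = linner y x
  linner_self_nonneg : ∀ x, ∃ c, linner x x = c * star c
  linner_self_eq_zero : ∀ x, linner x x = 0 → x = 0
  /-- bimodule condition `a · (x · b) = (a · x) · b` -/
  bimodule : ∀ a x b, right.smul (lsmul a x) b = lsmul a (right.smul x b)
  /-- compatibility `_A⟨x,y⟩ · z = x · ⟨y,z⟩_B` -/
  compat : ∀ x y z, lsmul (linner x y) z = right.smul x (right.inner y z)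

/-! ### Inverse monoids, multipliers and Busby–Smith twisted actions -/

/-- A unital inverse semigroup: a monoid with an involution `star` such that
`s (star s) s = s` and idempotents commute (so `star s` is the unique
generalized inverse of `s`). -/
class InverseMonoid (S : Type*) extends Monoid S, StarMul S where
  mul_star_mul : ∀ s : S, s * star s * s = s
  idem_comm : ∀ e f : S, e * e = e → f * f = f → e * f = f * e

/-- A unitary multiplier of a (closed two-sided) ideal `I` of a C*-algebra `A`,
encoded by the four multiplication maps `l a = u a`, `r a = a u`,
`l' a = u* a`, `r' a = a u*` on `I`. -/
structure UnitaryMultiplier (A : Type*) [CStarAlgebra A] (I : Set A) where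
  l : A → A
  r : A → A
  l' : A → A
  r' : A → A
  maps_mem : ∀ a ∈ I, l a ∈ I ∧ r a ∈ I ∧ l' a ∈ I ∧ r' a ∈ I
  map_add : ∀ a ∈ I, ∀ b ∈ I, l (a + b) = l a + l b ∧ r (a + b) = r a + r b ∧
      l' (a + b) = l' a + l' b ∧ r' (a + b) = r' a + r' b
  map_smul : ∀ (c : ℂ), ∀ a ∈ I, l (c • a) = c • l a ∧ r (c • a) = c • r a ∧
      l' (c • a) = c • l' a ∧ r' (c • a) = c • r' a
  l_mul : ∀ a ∈ I, ∀ b : A, l (a * b) = l a * b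
  l'_mul : ∀ a ∈ I, ∀ b : A, l' (a * b) = l' a * b
  r_mul : ∀ (a : A), ∀ b ∈ I, r (a * b) = a * r b
  r'_mul : ∀ (a : A), ∀ b ∈ I, r' (a * b) = a * r' b
  central : ∀ a ∈ I, ∀ b ∈ I, a * l b = r a * b
  central' : ∀ a ∈ I, ∀ b ∈ I, a * l' b = r' a * b
  star_l : ∀ a ∈ I, star (l a) = r' (star a)
  star_r : ∀ a ∈ I, star (r a) = l' (star a)
  unitary_l : ∀ a ∈ I, l (l' a) = a ∧ l' (l a) = a
  unitary_r : ∀ a ∈ I, r (r' a) = a ∧ r' (r a) = a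

/-- A Busby–Smith twisted action `(β, v)` of a unital inverse semigroup `S` on
a C*-algebra `A`: closed two-sided ideals `A_s`, partial automorphisms
`β_s : A_{s*} → A_s`, and unitary multipliers `v_{s,t}` of `A_{st}`,
satisfying `A_1 = A`, `β_s β_t = Ad v_{s,t} ∘ β_{st}`, triviality of `v_{s,t}`
when `s` or `t` is idempotent, and the cocycle identity. -/
structure TwistedAction (S A : Type*) [InverseMonoid S] [CStarAlgebra A] where
  /-- the ideal `A_s` -/
  ideal : S → Set A
  ideal_submodule : ∀ s, ∃ J : Submodule ℂ A, (J : Set A) = ideal s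
  ideal_closed : ∀ s, IsClosed (ideal s)
  ideal_mul_left : ∀ s (a : A), ∀ b ∈ ideal s, a * b ∈ ideal s
  ideal_mul_right : ∀ s (b : A), ∀ a ∈ ideal s, a * b ∈ ideal s
  ideal_one : ideal 1 = Set.univ
  /-- the partial automorphism `β_s : A_{s*} → A_s` -/
  β : S → A → A
  β_bij : ∀ s, Set.BijOn (β s) (ideal (star s)) (ideal s)
  β_add : ∀ s, ∀ a ∈ ideal (star s), ∀ b ∈ ideal (star s), β s (a + b) = β s a + β s b
  β_smul : ∀ s (c : ℂ), ∀ a ∈ ideal (star s), β s (c • a) = c • β s a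
  β_mul : ∀ s, ∀ a ∈ ideal (star s), ∀ b ∈ ideal (star s), β s (a * b) = β s a * β s b
  β_star : ∀ s, ∀ a ∈ ideal (star s), β s (star a) = star (β s a)
  /-- the unitary multiplier `v_{s,t}` of `A_{st}` -/
  v : (s t : S) → UnitaryMultiplier A (ideal (s * t))
  /-- `v_{s,t} = 1` if `s` or `t` is idempotent -/
  v_idem : ∀ s t : S, (s * s = s ∨ t * t = t) →
      ∀ a ∈ ideal (s * t), (v s t).l a = a ∧ (v s t).r a = a
  /-- `β_s β_t = Ad v_{s,t} ∘ β_{st}` (including equality of domains) -/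
  β_comp_mem : ∀ s t : S, ∀ a ∈ ideal (star t),
      (β t a ∈ ideal (star s) ↔ a ∈ ideal (star (s * t)))
  β_comp_dom : ∀ s t : S, ∀ a ∈ ideal (star (s * t)), a ∈ ideal (star t)
  β_comp : ∀ s t : S, ∀ a ∈ ideal (star (s * t)),
      β s (β t a) = (v s t).l ((v s t).r' (β (s * t) a))
  /-- cocycle identity: `β_r(a v_{s,t}) v_{r,st} = β_r(a) v_{r,s} v_{rs,t}`
  for `a ∈ A_{r*}A_{st}` (note `A_{r*}A_{st} = A_{r*} ∩ A_{st}`) -/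
  cocycle : ∀ r s t : S, ∀ a ∈ ideal (star r) ∩ ideal (s * t),
      (v r (s * t)).r (β r ((v s t).r a)) = (v (r * s) t).r ((v r s).r (β r a))
  /-- `β_s(A_{s*}A_t) = A_{st}` (see [Si2]) -/
  β_ideal_img : ∀ s t : S, β s '' (ideal (star s) ∩ ideal t) = ideal (s * t)

/-! ### Morita equivalence of Busby–Smith twisted actions -/

/-- A Morita equivalence `(X, φ)` between Busby–Smith twisted actions
`(A, S, α, u)` and `(B, S, β, v)`: an `A`–`B` imprimitivity bimodule `X`
together with partial automorphisms `(α_s, φ_s, β_s)` of `X`,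
`φ_s : X_{s*} → X_s` where `X_s := A_s·X = X·B_s`, satisfying
`φ_s φ_t = u_{s,t} · φ_{st}(·) · v_{s,t}*`.  The actions of the multipliers
`u_{s,t}` (on the left) and `v_{s,t}*` (on the right) on `X_{st}` are encoded
by the maps `uact` and `vact'`. -/
structure TwistedMoritaEquivalence (S : Type*) [InverseMonoid S] {A B : Type*}
    [CStarAlgebra A] [CStarAlgebra B]
    (TA : TwistedAction S A) (TB : TwistedAction S B)
    (X : Type*) [NormedAddCommGroup X] [NormedSpace ℂ X] [CompleteSpace X] where
  /-- the underlying Hilbert `A`–`B` bimodule structure -/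
  bim : HilbertBimodule A B X
  /-- the norm of `X` is the Hilbert module norm (so `X` is complete) -/
  norm_right : ∀ x : X, ‖x‖ = Real.sqrt ‖bim.right.inner x x‖
  /-- `X` is full on the left -/
  full_left : (Submodule.span ℂ {a : A | ∃ x y : X, a = bim.linner x y}).topologicalClosure = ⊤
  /-- `X` is full on the right -/
  full_right : (Submodule.span ℂ {b : B | ∃ x y : X, b = bim.right.inner x y}).topologicalClosure = ⊤
  /-- the subbimodule `X_s` -/
  Xs : S → Set X
  Xs_left : ∀ s, Xs s = {z : X | ∃ a ∈ TA.ideal s, ∃ x : X, z = bim.lsmul a x}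
  Xs_right : ∀ s, Xs s = {z : X | ∃ b ∈ TB.ideal s, ∃ x : X, z = bim.right.smul x b}
  /-- the partial automorphism `φ_s : X_{s*} → X_s` -/
  φ : S → X → X
  φ_bij : ∀ s, Set.BijOn (φ s) (Xs (star s)) (Xs s)
  φ_add : ∀ s, ∀ x ∈ Xs (star s), ∀ y ∈ Xs (star s), φ s (x + y) = φ s x + φ s y
  φ_smulC : ∀ s (c : ℂ), ∀ x ∈ Xs (star s), φ s (c • x) = c • φ s x
  φ_lsmul : ∀ s, ∀ a ∈ TA.ideal (star s), ∀ x ∈ Xs (star s),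
      φ s (bim.lsmul a x) = bim.lsmul (TA.β s a) (φ s x)
  φ_rsmul : ∀ s, ∀ b ∈ TB.ideal (star s), ∀ x ∈ Xs (star s),
      φ s (bim.right.smul x b) = bim.right.smul (φ s x) (TB.β s b)
  φ_linner : ∀ s, ∀ x ∈ Xs (star s), ∀ y ∈ Xs (star s),
      TA.β s (bim.linner x y) = bim.linner (φ s x) (φ s y)
  φ_rinner : ∀ s, ∀ x ∈ Xs (star s), ∀ y ∈ Xs (star s),
      TB.β s (bim.right.inner x y) = bim.right.inner (φ s x) (φ s y)
  /-- left action of the multiplier `u_{s,t}` on `X_{st} = A_{st}·X` -/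
  uact : S → S → X → X
  uact_spec : ∀ s t, ∀ a ∈ TA.ideal (s * t), ∀ x : X,
      uact s t (bim.lsmul a x) = bim.lsmul ((TA.v s t).l a) x
  /-- right action of the multiplier `v_{s,t}*` on `X_{st} = X·B_{st}` -/
  vact' : S → S → X → X
  vact'_spec : ∀ s t, ∀ b ∈ TB.ideal (s * t), ∀ x : X,
      vact' s t (bim.right.smul x b) = bim.right.smul x ((TB.v s t).r' b)
  /-- `φ_s φ_t = u_{s,t} · φ_{st}(·) · v_{s,t}*` (with matching domains) -/
  comp_mem : ∀ s t : S, ∀ x ∈ Xs (star t), (φ t x ∈ Xs (star s) ↔ x ∈ Xs (star (s * t)))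
  comp_dom : ∀ s t : S, ∀ x ∈ Xs (star (s * t)), x ∈ Xs (star t)
  comp : ∀ s t : S, ∀ x ∈ Xs (star (s * t)),
      φ s (φ t x) = uact s t (vact' s t (φ (s * t) x))

section Aux

open scoped ContinuousFunctionalCalculus

/-- Core CFC estimate: for `h x = 1 - x (x+δ)⁻¹` and `c = a* a`,
`‖cfc h c * c * cfc h c‖ ≤ δ`. -/
private lemma cfc_core {A : Type*} [CStarAlgebra A] (a : A) {δ : ℝ} (hδ : 0 < δ) :
    cfc (fun x : ℝ => 1 - x * (x + δ)⁻¹) (star a * a) * (star a * a) *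
      cfc (fun x : ℝ => 1 - x * (x + δ)⁻¹) (star a * a) =
      cfc (fun x : ℝ => (1 - x * (x + δ)⁻¹) * x * (1 - x * (x + δ)⁻¹)) (star a * a) ∧
    ‖cfc (fun x : ℝ => (1 - x * (x + δ)⁻¹) * x * (1 - x * (x + δ)⁻¹)) (star a * a)‖ ≤ δ := by
  set c : A := star a * a with hc_def
  have hc : IsSelfAdjoint c := IsSelfAdjoint.star_mul_self a
  have hspec : ∀ x ∈ spectrum ℝ c, (0:ℝ) ≤ x := fun x hx =>
    spectrum_star_mul_self_nonneg x hx
  have hcont : ContinuousOn (fun x : ℝ => 1 - x * (x + δ)⁻¹) (spectrum ℝ c) := by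
    refine continuousOn_const.sub (continuousOn_id.mul ?_)
    refine (continuousOn_id.add continuousOn_const).inv₀ fun x hx => ?_
    have := hspec x hx
    show x + δ ≠ 0
    exact (by linarith : (0:ℝ) < x + δ).ne'
  constructor
  · have h2 := cfc_mul (a := c) (fun x : ℝ => 1 - x * (x + δ)⁻¹) (fun x : ℝ => x)
      hcont continuousOn_id
    have h1 := cfc_mul (a := c) (fun x : ℝ => (1 - x * (x + δ)⁻¹) * x)
      (fun x : ℝ => 1 - x * (x + δ)⁻¹) (hcont.mul continuousOn_id) hcont
    rw [h2, cfc_id' ℝ c] at h1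
    exact h1.symm
  · refine norm_cfc_le hδ.le fun x hx => ?_
    have hx0 := hspec x hx
    have hp : (0:ℝ) < x + δ := by linarith
    have hval : (1 - x * (x + δ)⁻¹) * x * (1 - x * (x + δ)⁻¹) = δ^2 * x / (x + δ)^2 := by
      field_simp
      ring
    rw [hval, Real.norm_eq_abs, abs_of_nonneg (by positivity), div_le_iff₀ (by positivity)]
    nlinarith [sq_nonneg x, sq_nonneg (x - δ)]

/-- `‖a * cfc h (a* a)‖ ^ 2 ≤ δ` and `‖cfc h (a* a) * a*‖ ^ 2 ≤ δ`. -/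
private lemma cfc_norm_aux {A : Type*} [CStarAlgebra A] (a : A) {δ : ℝ} (hδ : 0 < δ) :
    ‖a * cfc (fun x : ℝ => 1 - x * (x + δ)⁻¹) (star a * a)‖ ^ 2 ≤ δ ∧
    ‖cfc (fun x : ℝ => 1 - x * (x + δ)⁻¹) (star a * a) * star a‖ ^ 2 ≤ δ := by
  obtain ⟨hfact, hbound⟩ := cfc_core a hδ
  set c : A := star a * a with hc_def
  set e : A := cfc (fun x : ℝ => 1 - x * (x + δ)⁻¹) c with he_def
  have he : IsSelfAdjoint e := cfc_predicate _ c
  have key : e * c * e = cfc (fun x : ℝ => (1 - x * (x + δ)⁻¹) * x * (1 - x * (x + δ)⁻¹)) c :=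
    hfact
  constructor
  · rw [sq, ← CStarRing.norm_star_mul_self]
    have : star (a * e) * (a * e) = e * c * e := by
      rw [star_mul, he.star_eq, hc_def]; noncomm_ring
    rw [this, key]; exact hbound
  · rw [sq, ← CStarRing.norm_self_mul_star]
    have : (e * star a) * star (e * star a) = e * c * e := by
      rw [star_mul, he.star_eq, star_star, hc_def]; noncomm_ring
    rw [this, key]; exact hbound

namespace TwistedAction

variable {S A : Type*} [InverseMonoid S] [CStarAlgebra A] (TA : TwistedAction S A)

lemma mem_of_submodule (s : S) :
    ∃ J : Submodule ℂ A, (J : Set A) = TA.ideal s := TA.ideal_submodule s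

lemma zero_mem' (s : S) : (0 : A) ∈ TA.ideal s := by
  obtain ⟨J, hJ⟩ := TA.ideal_submodule s
  rw [← hJ]; exact J.zero_mem

lemma add_mem' {s : S} {a b : A} (ha : a ∈ TA.ideal s) (hb : b ∈ TA.ideal s) :
    a + b ∈ TA.ideal s := by
  obtain ⟨J, hJ⟩ := TA.ideal_submodule s
  rw [← hJ] at ha hb ⊢; exact J.add_mem ha hb

lemma smul_mem' {s : S} (l : ℂ) {a : A} (ha : a ∈ TA.ideal s) :
    l • a ∈ TA.ideal s := by
  obtain ⟨J, hJ⟩ := TA.ideal_submodule s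
  rw [← hJ] at ha ⊢; exact J.smul_mem l ha

lemma neg_mem' {s : S} {a : A} (ha : a ∈ TA.ideal s) : -a ∈ TA.ideal s := by
  simpa using TA.smul_mem' (-1 : ℂ) ha

lemma sub_mem' {s : S} {a b : A} (ha : a ∈ TA.ideal s) (hb : b ∈ TA.ideal s) :
    a - b ∈ TA.ideal s := by
  rw [sub_eq_add_neg]; exact TA.add_mem' ha (TA.neg_mem' hb)

/-- Closed two-sided ideals of a C*-algebra are star-closed. -/
lemma star_mem' {s : S} {a : A} (ha : a ∈ TA.ideal s) : star a ∈ TA.ideal s := by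
  rw [← (TA.ideal_closed s).closure_eq]
  refine Metric.mem_closure_iff.mpr fun ε hε => ?_
  set δ : ℝ := ε ^ 2 / 2 with hδ_def
  have hδ : 0 < δ := by positivity
  set c : A := star a * a with hc_def
  have hcmem : c ∈ TA.ideal s := TA.ideal_mul_left s (star a) a ha
  have hc : IsSelfAdjoint c := IsSelfAdjoint.star_mul_self a
  have hspec : ∀ x ∈ spectrum ℝ c, (0:ℝ) ≤ x := fun x hx =>
    spectrum_star_mul_self_nonneg x hx
  have hcont_inv : ContinuousOn (fun x : ℝ => (x + δ)⁻¹) (spectrum ℝ c) := by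
    refine (continuousOn_id.add continuousOn_const).inv₀ fun x hx => ?_
    have := hspec x hx
    show x + δ ≠ 0
    exact (by linarith : (0:ℝ) < x + δ).ne'
  have hcont : ContinuousOn (fun x : ℝ => 1 - x * (x + δ)⁻¹) (spectrum ℝ c) :=
    continuousOn_const.sub (continuousOn_id.mul hcont_inv)
  set b : A := cfc (fun x : ℝ => x * (x + δ)⁻¹) c * star a with hb_def
  have hbmem : b ∈ TA.ideal s := by
    have hfe := cfc_mul (a := c) (fun x : ℝ => x) (fun x : ℝ => (x + δ)⁻¹)
      continuousOn_id hcont_inv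
    rw [cfc_id' ℝ c] at hfe
    rw [hb_def, hfe]
    exact TA.ideal_mul_right s (star a) _
      (TA.ideal_mul_right s (cfc (fun x : ℝ => (x + δ)⁻¹) c) c hcmem)
  refine ⟨b, hbmem, ?_⟩
  have hdiff : star a - b = cfc (fun x : ℝ => 1 - x * (x + δ)⁻¹) c * star a := by
    have hsub := cfc_sub (fun _ : ℝ => (1:ℝ)) (fun x : ℝ => x * (x + δ)⁻¹) c
      continuousOn_const (continuousOn_id.mul hcont_inv)
    rw [cfc_const_one ℝ c] at hsub
    rw [hb_def, hsub, sub_mul, one_mul]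
  have hb2 := (cfc_norm_aux a hδ).2
  rw [dist_eq_norm, hdiff]
  have hnn : (0:ℝ) ≤ ‖cfc (fun x : ℝ => 1 - x * (x + δ)⁻¹) c * star a‖ := norm_nonneg _
  nlinarith [hb2, hε]

/-- approximate factorization `a ≈ a * d * a`. -/
lemma approx_mid {a : A} {ε : ℝ} (hε : 0 < ε) : ∃ d : A, ‖a - a * d * a‖ < ε := by
  set δ : ℝ := ε ^ 2 / 2 with hδ_def
  have hδ : 0 < δ := by positivity
  set c : A := star a * a with hc_def
  have hc : IsSelfAdjoint c := IsSelfAdjoint.star_mul_self a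
  have hspec : ∀ x ∈ spectrum ℝ c, (0:ℝ) ≤ x := fun x hx =>
    spectrum_star_mul_self_nonneg x hx
  have hcont_inv : ContinuousOn (fun x : ℝ => (x + δ)⁻¹) (spectrum ℝ c) := by
    refine (continuousOn_id.add continuousOn_const).inv₀ fun x hx => ?_
    have := hspec x hx
    show x + δ ≠ 0
    exact (by linarith : (0:ℝ) < x + δ).ne'
  refine ⟨cfc (fun x : ℝ => (x + δ)⁻¹) c * star a, ?_⟩
  have hfact : a * (cfc (fun x : ℝ => (x + δ)⁻¹) c * star a) * a
      = a * cfc (fun x : ℝ => x * (x + δ)⁻¹) c := by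
    have hfe := cfc_mul (a := c) (fun x : ℝ => (x + δ)⁻¹) (fun x : ℝ => x)
      hcont_inv continuousOn_id
    rw [cfc_id' ℝ c] at hfe
    have hcomm : cfc (fun x : ℝ => x * (x + δ)⁻¹) c
        = cfc (fun x : ℝ => (x + δ)⁻¹) c * c := by
      rw [← hfe]
      exact cfc_congr fun x _ => mul_comm x _
    rw [hcomm, hc_def]
    noncomm_ring
  have hdiff : a - a * (cfc (fun x : ℝ => (x + δ)⁻¹) c * star a) * a
      = a * cfc (fun x : ℝ => 1 - x * (x + δ)⁻¹) c := by
    have hsub := cfc_sub (fun _ : ℝ => (1:ℝ)) (fun x : ℝ => x * (x + δ)⁻¹) c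
      continuousOn_const (continuousOn_id.mul hcont_inv)
    rw [cfc_const_one ℝ c] at hsub
    rw [hfact, hsub, mul_sub, mul_one]
  rw [hdiff]
  have hb1 := (cfc_norm_aux a hδ).1
  have hnn : (0:ℝ) ≤ ‖a * cfc (fun x : ℝ => 1 - x * (x + δ)⁻¹) c‖ := norm_nonneg _
  nlinarith [hb1, hε]

lemma β_zero (s : S) : TA.β s 0 = 0 := by
  have h0 := TA.zero_mem' (star s)
  have := TA.β_add s 0 h0 0 h0
  rw [add_zero] at this
  exact (add_eq_left.mp this.symm)

lemma β_sub (s : S) {a b : A} (ha : a ∈ TA.ideal (star s)) (hb : b ∈ TA.ideal (star s)) :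
    TA.β s (a - b) = TA.β s a - TA.β s b := by
  have h1 : a - b = a + (-1 : ℂ) • b := by
    rw [neg_one_smul, sub_eq_add_neg]
  rw [h1, TA.β_add s a ha _ (TA.smul_mem' (-1 : ℂ) hb), TA.β_smul s (-1 : ℂ) b hb,
    neg_one_smul, ← sub_eq_add_neg]

/-- The ideal `A_{s*}` as a closed non-unital star subalgebra. -/
noncomputable def idealAlg (s : S) : NonUnitalStarSubalgebra ℂ A where
  carrier := TA.ideal s
  add_mem' := fun ha hb => TA.add_mem' ha hb
  zero_mem' := TA.zero_mem' s
  mul_mem' := fun {a b} _ hb => TA.ideal_mul_left s a b hb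
  smul_mem' := fun l a ha => TA.smul_mem' l ha
  star_mem' := fun ha => TA.star_mem' ha

/-- The partial automorphism `β_s` is contractive on its domain. -/
lemma β_norm_le (s : S) {a : A} (ha : a ∈ TA.ideal (star s)) :
    ‖TA.β s a‖ ≤ ‖a‖ := by
  haveI hcl : IsClosed ((TA.idealAlg (star s) : Set A)) := TA.ideal_closed (star s)
  set N := TA.idealAlg (star s) with hN
  let Φ : N →⋆ₙₐ[ℂ] A :=
    { toFun := fun x => TA.β s x
      map_smul' := fun l x => TA.β_smul s l x x.2
      map_zero' := TA.β_zero s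
      map_add' := fun x y => TA.β_add s x x.2 y y.2
      map_mul' := fun x y => TA.β_mul s x x.2 y y.2
      map_star' := fun x => TA.β_star s x x.2 }
  exact NonUnitalStarAlgHom.norm_apply_le Φ (⟨a, ha⟩ : N)

end TwistedAction

end Aux

section Main

variable {S A B : Type*} [InverseMonoid S]
    [CStarAlgebra A] [CStarAlgebra B]
    {TA : TwistedAction S A} {TB : TwistedAction S B}
    {X : Type*} [NormedAddCommGroup X] [NormedSpace ℂ X] [CompleteSpace X]

private lemma linner_rsmul (M : TwistedMoritaEquivalence S TA TB X) (x y : X) (b : A) :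
    M.bim.linner x (M.bim.lsmul b y) = M.bim.linner x y * star b := by
  have h1 : M.bim.linner x (M.bim.lsmul b y)
      = star (M.bim.linner (M.bim.lsmul b y) x) := (M.bim.linner_star _ _).symm
  rw [h1, M.bim.linner_lsmul_left, star_mul, M.bim.linner_star]

private lemma lsmul_mem_Xs (M : TwistedMoritaEquivalence S TA TB X) {s : S} {a : A}
    (ha : a ∈ TA.ideal s) (x : X) : M.bim.lsmul a x ∈ M.Xs s := by
  rw [M.Xs_left]; exact ⟨a, ha, x, rfl⟩

private lemma linner_mem_left (M : TwistedMoritaEquivalence S TA TB X) {s : S} {x : X}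
    (hx : x ∈ M.Xs s) (y : X) : M.bim.linner x y ∈ TA.ideal s := by
  rw [M.Xs_left] at hx
  obtain ⟨a, ha, w, rfl⟩ := hx
  rw [M.bim.linner_lsmul_left]
  exact TA.ideal_mul_right s _ a ha

private lemma linner_mem_right (M : TwistedMoritaEquivalence S TA TB X) {s : S} {y : X}
    (hy : y ∈ M.Xs s) (x : X) : M.bim.linner x y ∈ TA.ideal s := by
  rw [M.Xs_left] at hy
  obtain ⟨a, ha, w, rfl⟩ := hy
  rw [linner_rsmul]
  exact TA.ideal_mul_left s _ _ (TA.star_mem' ha)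

end Main

/-- If `(X, φ)` is a Morita equivalence between Busby–Smith twisted actions,
then the closed span of `α_s(_A⟨X_{s*}, X_t⟩)` equals `A_{st}`. -/
theorem morita_linner_span {S A B : Type*} [InverseMonoid S]
    [CStarAlgebra A] [CStarAlgebra B]
    {TA : TwistedAction S A} {TB : TwistedAction S B}
    {X : Type*} [NormedAddCommGroup X] [NormedSpace ℂ X] [CompleteSpace X]
    (M : TwistedMoritaEquivalence S TA TB X) (s t : S) :
    ((Submodule.span ℂ {a : A | ∃ x ∈ M.Xs (star s), ∃ y ∈ M.Xs t,
        a = TA.β s (M.bim.linner x y)}).topologicalClosure : Set A)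
      = TA.ideal (s * t) := by
  classical
  set E : Set A := {a : A | ∃ x ∈ M.Xs (star s), ∃ y ∈ M.Xs t,
      a = TA.β s (M.bim.linner x y)} with hE_def
  -- E ⊆ A_{st}
  have hE_sub : E ⊆ TA.ideal (s * t) := by
    rintro _ ⟨x, hx, y, hy, rfl⟩
    rw [← TA.β_ideal_img s t]
    exact ⟨M.bim.linner x y,
      ⟨linner_mem_left M hx y, linner_mem_right M hy x⟩, rfl⟩
  apply Set.Subset.antisymm
  · -- closure of span ⊆ ideal
    obtain ⟨J, hJ⟩ := TA.ideal_submodule (s * t)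
    have h1 : (Submodule.span ℂ E : Set A) ⊆ TA.ideal (s * t) := by
      rw [← hJ]
      exact_mod_cast Submodule.span_le.mpr (by rw [hJ]; exact hE_sub)
    rw [Submodule.topologicalClosure_coe]
    calc closure (Submodule.span ℂ E : Set A) ⊆ closure (TA.ideal (s * t)) :=
          closure_mono h1
      _ = TA.ideal (s * t) := (TA.ideal_closed (s * t)).closure_eq
  · -- ideal ⊆ closure of span
    intro c hc
    rw [← TA.β_ideal_img s t] at hc
    obtain ⟨a, ⟨has, hat⟩, rfl⟩ := hc
    rw [Submodule.topologicalClosure_coe]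
    refine Metric.mem_closure_iff.mpr fun ε hε => ?_
    -- step 1: approximate a by a * d₁ * a
    obtain ⟨d₁, hd₁⟩ := TwistedAction.approx_mid (A := A) (a := a) (ε := ε / 2) (by positivity)
    -- step 2: approximate d₁ by an element of the span of inner products
    have hfull : d₁ ∈ closure ((Submodule.span ℂ
        {a : A | ∃ x y : X, a = M.bim.linner x y}) : Set A) := by
      have := M.full_left
      rw [← Submodule.topologicalClosure_coe, this]
      trivial
    set ε' : ℝ := ε / (2 * (‖a‖ + 1) ^ 2) with hε'_def
    have hε' : 0 < ε' := by positivity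
    obtain ⟨d, hd_mem, hd_close⟩ := Metric.mem_closure_iff.mp hfull ε' hε'
    -- push through β
    have hkey : ∀ w ∈ Submodule.span ℂ {a : A | ∃ x y : X, a = M.bim.linner x y},
        a * w * a ∈ TA.ideal (star s) ∧
          TA.β s (a * w * a) ∈ Submodule.span ℂ E := by
      intro w hw
      induction hw using Submodule.span_induction with
      | mem w hw =>
        obtain ⟨x, y, rfl⟩ := hw
        have heq : a * M.bim.linner x y * a
            = M.bim.linner (M.bim.lsmul a x) (M.bim.lsmul (star a) y) := by
          rw [linner_rsmul, M.bim.linner_lsmul_left, star_star, mul_assoc]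
        constructor
        · rw [heq, M.bim.linner_lsmul_left]
          exact TA.ideal_mul_right (star s) _ a has
        · refine Submodule.subset_span ?_
          exact ⟨M.bim.lsmul a x, lsmul_mem_Xs M has x,
            M.bim.lsmul (star a) y, lsmul_mem_Xs M (TA.star_mem' hat) y, by rw [heq]⟩
      | zero =>
        constructor
        · simpa using TA.zero_mem' (star s)
        · simp only [mul_zero, zero_mul]
          rw [TA.β_zero s]
          exact Submodule.zero_mem _
      | add w₁ w₂ hw₁ hw₂ ih₁ ih₂ =>
        have heq : a * (w₁ + w₂) * a = a * w₁ * a + a * w₂ * a := by noncomm_ring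
        constructor
        · rw [heq]; exact TA.add_mem' ih₁.1 ih₂.1
        · rw [heq, TA.β_add s _ ih₁.1 _ ih₂.1]
          exact Submodule.add_mem _ ih₁.2 ih₂.2
      | smul l w hw ih =>
        have heq : a * (l • w) * a = l • (a * w * a) := by
          rw [mul_smul_comm, smul_mul_assoc]
        constructor
        · rw [heq]; exact TA.smul_mem' l ih.1
        · rw [heq, TA.β_smul s l _ ih.1]
          exact Submodule.smul_mem _ l ih.2
    obtain ⟨hmem_ideal, hmem_span⟩ := hkey d hd_mem
    refine ⟨TA.β s (a * d * a), hmem_span, ?_⟩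
    -- distance estimate
    have hada : a - a * d * a ∈ TA.ideal (star s) :=
      TA.sub_mem' has hmem_ideal
    have hβ : dist (TA.β s a) (TA.β s (a * d * a))
        = ‖TA.β s (a - a * d * a)‖ := by
      rw [dist_eq_norm, TA.β_sub s has hmem_ideal]
    have hcontr := TA.β_norm_le s hada
    have hsplit : ‖a - a * d * a‖ ≤ ‖a - a * d₁ * a‖ + ‖a * d₁ * a - a * d * a‖ := by
      have : a - a * d * a = (a - a * d₁ * a) + (a * d₁ * a - a * d * a) := by abel
      rw [this]; exact norm_add_le _ _
    have hmid : ‖a * d₁ * a - a * d * a‖ < ε / 2 := by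
      have heq : a * d₁ * a - a * d * a = a * (d₁ - d) * a := by noncomm_ring
      have hb1 : ‖a * (d₁ - d) * a‖ ≤ ‖a‖ * ‖d₁ - d‖ * ‖a‖ :=
        le_trans (norm_mul_le _ _) (by
          gcongr
          exact norm_mul_le _ _)
      have hdd : ‖d₁ - d‖ < ε' := by rw [← dist_eq_norm]; exact hd_close
      have hposa : (0:ℝ) ≤ ‖a‖ := norm_nonneg _
      have h2 : ‖a‖ * ‖d₁ - d‖ * ‖a‖ < (‖a‖ + 1) ^ 2 * ε' := by
        have hstep := mul_lt_mul_of_pos_left hdd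
          (show (0:ℝ) < (‖a‖ + 1) ^ 2 by positivity)
        nlinarith [norm_nonneg (d₁ - d)]
      have h3 : (‖a‖ + 1) ^ 2 * ε' = ε / 2 := by
        rw [hε'_def]
        field_simp
      rw [heq]
      calc ‖a * (d₁ - d) * a‖ ≤ ‖a‖ * ‖d₁ - d‖ * ‖a‖ := hb1
        _ < (‖a‖ + 1) ^ 2 * ε' := h2
        _ = ε / 2 := h3
    rw [hβ]
    calc ‖TA.β s (a - a * d * a)‖ ≤ ‖a - a * d * a‖ := hcontr
      _ ≤ ‖a - a * d₁ * a‖ + ‖a * d₁ * a - a * d * a‖ := hsplit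
      _ < ε / 2 + ε / 2 := by exact add_lt_add hd₁ hmid
      _ = ε := by ring
end

section
/- If two Busby-Smith twisted actions (A, S, α, u) and (A, S, β, w) of a unital inverse semigroup S on the same C*-algebra A are exterior equivalent via unitary multipliers V_s, then they are Morita equivalent: the maps φ_s(a) = α_s(a)V_s* on the standard A–A imprimitivity bimodule implement a Morita equivalence. -/
/-! ### Morita equivalence of Busby–Smith twisted actions -/

/-- A Morita equivalence `(X, φ)` between Busby–Smith twisted actions
`(A, S, α, u)` and `(B, S, β, v)`: an `A`–`B` imprimitivity bimodule `X`
together with partial automorphisms `(α_s, φ_s, β_s)` of `X`,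
`φ_s : X_{s*} → X_s` where `X_s := A_s·X = X·B_s`, satisfying
`φ_s φ_t = u_{s,t} · φ_{st}(·) · v_{s,t}*`.  The actions of the multipliers
`u_{s,t}` (on the left) and `v_{s,t}*` (on the right) on `X_{st}` are encoded
by the maps `uact` and `vact'`. -/
structure BSMoritaEquivalence (S : Type*) [InverseMonoid S] {A B : Type*}
    [CStarAlgebra A] [CStarAlgebra B]
    (TA : TwistedAction S A) (TB : TwistedAction S B)
    (X : Type*) [NormedAddCommGroup X] [NormedSpace ℂ X] [CompleteSpace X] where
  /-- the underlying Hilbert `A`–`B` bimodule structure -/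
  bim : HilbertBimodule A B X
  /-- the norm of `X` is the Hilbert module norm (so `X` is complete) -/
  norm_right : ∀ x : X, ‖x‖ = Real.sqrt ‖bim.right.inner x x‖
  /-- `X` is full on the left -/
  full_left : (Submodule.span ℂ {a : A | ∃ x y : X, a = bim.linner x y}).topologicalClosure = ⊤
  /-- `X` is full on the right -/
  full_right : (Submodule.span ℂ {b : B | ∃ x y : X, b = bim.right.inner x y}).topologicalClosure = ⊤
  /-- the subbimodule `X_s` -/
  Xs : S → Set X
  Xs_left : ∀ s, Xs s = {z : X | ∃ a ∈ TA.ideal s, ∃ x : X, z = bim.lsmul a x}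
  Xs_right : ∀ s, Xs s = {z : X | ∃ b ∈ TB.ideal s, ∃ x : X, z = bim.right.smul x b}
  /-- the partial automorphism `φ_s : X_{s*} → X_s` -/
  φ : S → X → X
  φ_bij : ∀ s, Set.BijOn (φ s) (Xs (star s)) (Xs s)
  φ_add : ∀ s, ∀ x ∈ Xs (star s), ∀ y ∈ Xs (star s), φ s (x + y) = φ s x + φ s y
  φ_smulC : ∀ s (c : ℂ), ∀ x ∈ Xs (star s), φ s (c • x) = c • φ s x
  φ_lsmul : ∀ s, ∀ a ∈ TA.ideal (star s), ∀ x ∈ Xs (star s),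
      φ s (bim.lsmul a x) = bim.lsmul (TA.β s a) (φ s x)
  φ_rsmul : ∀ s, ∀ b ∈ TB.ideal (star s), ∀ x ∈ Xs (star s),
      φ s (bim.right.smul x b) = bim.right.smul (φ s x) (TB.β s b)
  φ_linner : ∀ s, ∀ x ∈ Xs (star s), ∀ y ∈ Xs (star s),
      TA.β s (bim.linner x y) = bim.linner (φ s x) (φ s y)
  φ_rinner : ∀ s, ∀ x ∈ Xs (star s), ∀ y ∈ Xs (star s),
      TB.β s (bim.right.inner x y) = bim.right.inner (φ s x) (φ s y)
  /-- left action of the multiplier `u_{s,t}` on `X_{st} = A_{st}·X` -/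
  uact : S → S → X → X
  uact_spec : ∀ s t, ∀ a ∈ TA.ideal (s * t), ∀ x : X,
      uact s t (bim.lsmul a x) = bim.lsmul ((TA.v s t).l a) x
  /-- right action of the multiplier `v_{s,t}*` on `X_{st} = X·B_{st}` -/
  vact' : S → S → X → X
  vact'_spec : ∀ s t, ∀ b ∈ TB.ideal (s * t), ∀ x : X,
      vact' s t (bim.right.smul x b) = bim.right.smul x ((TB.v s t).r' b)
  /-- `φ_s φ_t = u_{s,t} · φ_{st}(·) · v_{s,t}*` (with matching domains) -/
  comp_mem : ∀ s t : S, ∀ x ∈ Xs (star t), (φ t x ∈ Xs (star s) ↔ x ∈ Xs (star (s * t)))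
  comp_dom : ∀ s t : S, ∀ x ∈ Xs (star (s * t)), x ∈ Xs (star t)
  comp : ∀ s t : S, ∀ x ∈ Xs (star (s * t)),
      φ s (φ t x) = uact s t (vact' s t (φ (s * t) x))

/-- An exterior equivalence between two Busby–Smith twisted actions
`(α, u)` and `(β, w)` of `S` on the same C*-algebra `A`: unitary multipliers
`V_s` of `A_s` with `β_s = Ad V_s ∘ α_s` and
`w_{s,t} = V_s α_s(1·V_t) u_{s,t} V_{st}*`.  The multiplier `α_s(1·V_t)` of
`A_s` is encoded by its left multiplication map `mV s t`. -/
structure ExteriorEquivalence (S A : Type*) [InverseMonoid S] [CStarAlgebra A]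
    (TA TB : TwistedAction S A) where
  ideal_eq : ∀ s, TB.ideal s = TA.ideal s
  /-- the unitary multiplier `V_s` of `A_s` -/
  V : (s : S) → UnitaryMultiplier A (TA.ideal s)
  /-- `β_s = Ad V_s ∘ α_s` -/
  beta_eq : ∀ s, ∀ a ∈ TA.ideal (star s), TB.β s a = (V s).l ((V s).r' (TA.β s a))
  /-- left multiplication by the multiplier `α_s(1_{M(A_{s*})} V_t)` of `A_s` -/
  mV : S → S → A → A
  mV_spec : ∀ s t, ∀ a ∈ TA.ideal (star s) ∩ TA.ideal t,
      mV s t (TA.β s a) = TA.β s ((V t).l a)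
  mV_mem : ∀ s t, ∀ a ∈ TA.ideal s, mV s t a ∈ TA.ideal s
  mV_add : ∀ s t, ∀ a ∈ TA.ideal s, ∀ b ∈ TA.ideal s, mV s t (a + b) = mV s t a + mV s t b
  mV_mod : ∀ s t, ∀ a ∈ TA.ideal s, ∀ b : A, mV s t (a * b) = mV s t a * b
  /-- `w_{s,t} = V_s α_s(1·V_t) u_{s,t} V_{st}*`, as left multiplication
  maps on `A_{st}` -/
  w_eq : ∀ s t, ∀ c ∈ TA.ideal (s * t),
      (TB.v s t).l c = (V s).l (mV s t ((TA.v s t).l ((V (s * t)).l' c)))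

namespace ExtMoritaAux

variable {A : Type*} [CStarAlgebra A]

/-- Key analytic fact: a closed two-sided ideal of a C*-algebra contains `x`
whenever it contains `x* x`. -/
lemma key_mem (J : Set A)
    (hcl : IsClosed J) (hml : ∀ (a : A), ∀ b ∈ J, a * b ∈ J)
    (hmr : ∀ (b : A), ∀ a ∈ J, a * b ∈ J)
    (x : A) (hx : star x * x ∈ J) : x ∈ J := by
  set h : A := star x * x with hh
  have hsa : IsSelfAdjoint h := IsSelfAdjoint.star_mul_self x
  rw [← hcl.closure_eq, Metric.mem_closure_iff]
  intro ε hε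
  obtain ⟨n, hn⟩ := exists_nat_gt ((ε ^ 2)⁻¹ ^ 2)
  have hn0 : (0:ℝ) < n := lt_of_le_of_lt (by positivity) hn
  have hsp : (0:ℝ) < Real.sqrt n := Real.sqrt_pos.mpr hn0
  have hsn : (ε ^ 2)⁻¹ < Real.sqrt n := by
    rw [show ((n:ℝ)) = Real.sqrt n ^ 2 from (Real.sq_sqrt hn0.le).symm] at hn
    nlinarith [sq_nonneg ((ε^2)⁻¹ - Real.sqrt n)]
  have hbound : (Real.sqrt n)⁻¹ < ε ^ 2 := by
    rw [inv_lt_comm₀ hsp (by positivity)]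
    exact hsn
  set g : ℝ → ℝ := fun t => (n : ℝ) * t / (1 + n * t ^ 2) with hg
  have hgc : Continuous g := by
    apply Continuous.div (by fun_prop) (by fun_prop)
    intro t; nlinarith [sq_nonneg t]
  set c : A := h * cfc g h with hc
  refine ⟨x * c, hml x c (hmr _ h hx), ?_⟩
  rw [dist_eq_norm]
  have h1c : 1 - c = cfc (fun t : ℝ => 1 - t * g t) h := by
    rw [cfc_sub _ _ h (by fun_prop) (by fun_prop), cfc_const (1:ℝ) h,
      cfc_mul _ _ h (by fun_prop) (by fun_prop), cfc_id' ℝ h, map_one]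
  have hsa1c : IsSelfAdjoint (1 - c) := h1c ▸ cfc_predicate _ h
  have key : ‖x - x * c‖ ^ 2 ≤ (Real.sqrt n)⁻¹ := by
    have e1 : x - x * c = x * (1 - c) := (mul_one_sub x c).symm
    have e2 : ‖x * (1 - c)‖ ^ 2 = ‖star (x * (1 - c)) * (x * (1 - c))‖ := by
      rw [CStarRing.norm_star_mul_self, sq]
    have e3 : star (x * (1 - c)) * (x * (1 - c)) =
        cfc (fun t : ℝ => (1 - t * g t) * (t * (1 - t * g t))) h := by
      rw [star_mul, hsa1c.star_eq]
      calc (1 - c) * star x * (x * (1 - c)) = (1 - c) * (h * (1 - c)) := by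
            rw [hh]; noncomm_ring
        _ = cfc (fun t : ℝ => (1 - t * g t) * (t * (1 - t * g t))) h := by
            rw [cfc_mul _ _ h (by fun_prop) (by fun_prop),
              cfc_mul _ _ h (by fun_prop) (by fun_prop), cfc_id' ℝ h, ← h1c]
    rw [e1, e2, e3]
    apply norm_cfc_le (by positivity)
    intro t _
    have hd : (0:ℝ) < 1 + n * t ^ 2 := by nlinarith [sq_nonneg t]
    have hval : (1 - t * g t) * (t * (1 - t * g t)) = t / (1 + n * t ^ 2) ^ 2 := by
      simp only [hg]
      field_simp
      ring
    rw [hval, Real.norm_eq_abs, abs_div, abs_of_pos (pow_pos hd 2),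
      div_le_iff₀ (pow_pos hd 2)]
    have h2 : 1 + (n:ℝ) * t ^ 2 ≥ 2 * Real.sqrt n * |t| := by
      have : ((n:ℝ)) * t ^ 2 = (Real.sqrt n * |t|) ^ 2 := by
        rw [mul_pow, Real.sq_sqrt hn0.le, sq_abs]
      nlinarith [sq_nonneg (Real.sqrt n * |t| - 1)]
    have h1a : (1:ℝ) ≤ 1 + n * t ^ 2 := by nlinarith [sq_nonneg t]
    have h2a : (1 + (n:ℝ) * t ^ 2) * 1 ≤ (1 + n * t ^ 2) * (1 + n * t ^ 2) :=
      mul_le_mul_of_nonneg_left h1a hd.le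
    have h3 : (1 + (n:ℝ) * t ^ 2) ^ 2 ≥ 2 * Real.sqrt n * |t| := by nlinarith [h2a, h2]
    calc |t| ≤ 2 * |t| := by linarith [abs_nonneg t]
      _ = (Real.sqrt n)⁻¹ * (2 * Real.sqrt n * |t|) := by field_simp
      _ ≤ (Real.sqrt n)⁻¹ * (1 + n * t ^ 2) ^ 2 :=
          mul_le_mul_of_nonneg_left h3 (by positivity)
  nlinarith [norm_nonneg (x - x * c), key, hbound, hε]

/-- A closed two-sided ideal is star-closed. -/
lemma star_mem (J : Set A)
    (hcl : IsClosed J) (hml : ∀ (a : A), ∀ b ∈ J, a * b ∈ J)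
    (hmr : ∀ (b : A), ∀ a ∈ J, a * b ∈ J)
    (a : A) (ha : a ∈ J) : star a ∈ J :=
  key_mem J hcl hml hmr (star a) (by rw [star_star]; exact hmr (star a) a ha)

lemma mem_of_mul_star_self (J : Set A)
    (hcl : IsClosed J) (hml : ∀ (a : A), ∀ b ∈ J, a * b ∈ J)
    (hmr : ∀ (b : A), ∀ a ∈ J, a * b ∈ J)
    (x : A) (hx : x * star x ∈ J) : x ∈ J := by
  have h1 : star x ∈ J :=
    key_mem J hcl hml hmr (star x) (by rw [star_star]; exact hx)
  simpa using star_mem J hcl hml hmr (star x) h1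

variable {I : Set A} (M : UnitaryMultiplier A I)

lemma um_star_r' (hstarI : ∀ a ∈ I, star a ∈ I) :
    ∀ a ∈ I, star (M.r' a) = M.l (star a) := by
  intro a ha
  have h := M.star_l (star a) (hstarI a ha)
  rw [star_star] at h
  rw [← h, star_star]

lemma um_star_l'' (hstarI : ∀ a ∈ I, star a ∈ I) :
    ∀ a ∈ I, star (M.l' a) = M.r (star a) := by
  intro a ha
  have h := M.star_r (star a) (hstarI a ha)
  rw [star_star] at h
  rw [← h, star_star]

/-- The four maps of a unitary multiplier of `I` preserve `I ∩ J` for every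
closed two-sided ideal `J`. -/
lemma um_preserve (hstarI : ∀ a ∈ I, star a ∈ I)
    (J : Set A) (hclJ : IsClosed J) (hmlJ : ∀ (a : A), ∀ b ∈ J, a * b ∈ J)
    (hmrJ : ∀ (b : A), ∀ a ∈ J, a * b ∈ J)
    (d : A) (hdI : d ∈ I) (hdJ : d ∈ J) :
    M.l d ∈ J ∧ M.r d ∈ J ∧ M.l' d ∈ J ∧ M.r' d ∈ J := by
  have hsdI : star d ∈ I := hstarI d hdI
  obtain ⟨hld, hrd, hl'd, hr'd⟩ := M.maps_mem d hdI
  refine ⟨?_, ?_, ?_, ?_⟩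
  · -- l d : star (l d) * l d = star d * d ∈ J
    apply key_mem J hclJ hmlJ hmrJ
    have e : star (M.l d) * M.l d = star d * d := by
      rw [M.star_l d hdI]
      rw [← M.central' (star d) hsdI (M.l d) hld, (M.unitary_l d hdI).2]
    rw [e]; exact hmlJ (star d) d hdJ
  · -- r d : r d * star (r d) = d * star d ∈ J
    apply mem_of_mul_star_self J hclJ hmlJ hmrJ
    have e : M.r d * star (M.r d) = d * star d := by
      rw [M.star_r d hdI, M.central' (M.r d) hrd (star d) hsdI, (M.unitary_r d hdI).2]
    rw [e]; exact hmrJ (star d) d hdJ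
  · -- l' d : star (l' d) * l' d = star d * d ∈ J
    apply key_mem J hclJ hmlJ hmrJ
    have e : star (M.l' d) * M.l' d = star d * d := by
      rw [um_star_l'' M hstarI d hdI]
      rw [← M.central (star d) hsdI (M.l' d) hl'd, (M.unitary_l d hdI).1]
    rw [e]; exact hmlJ (star d) d hdJ
  · -- r' d : r' d * star (r' d) = d * star d ∈ J
    apply mem_of_mul_star_self J hclJ hmlJ hmrJ
    have e : M.r' d * star (M.r' d) = d * star d := by
      rw [um_star_r' M hstarI d hdI, M.central (M.r' d) hr'd (star d) hsdI,
        (M.unitary_r d hdI).1]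
    rw [e]; exact hmrJ (star d) d hdJ

/-- Right cancellation in a star-closed subspace. -/
lemma cancel_right (hsub : ∃ Jm : Submodule ℂ A, (Jm : Set A) = I)
    (hstarI : ∀ a ∈ I, star a ∈ I)
    {x y : A} (hx : x ∈ I) (hy : y ∈ I) (h : ∀ b ∈ I, x * b = y * b) : x = y := by
  obtain ⟨Jm, rfl⟩ := hsub
  have hxy : x - y ∈ Jm := sub_mem hx hy
  have h2 := h (star (x - y)) (hstarI _ hxy)
  have h3 : (x - y) * star (x - y) = 0 := by rw [sub_mul, h2, sub_self]
  exact sub_eq_zero.mp ((CStarRing.mul_star_self_eq_zero_iff (x - y)).mp h3)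

/-- `l` and `r'` of a unitary multiplier commute. -/
lemma um_l_r'_comm (hsub : ∃ Jm : Submodule ℂ A, (Jm : Set A) = I)
    (hstarI : ∀ a ∈ I, star a ∈ I)
    (m : A) (hm : m ∈ I) : M.l (M.r' m) = M.r' (M.l m) := by
  obtain ⟨hlm, -, -, hr'm⟩ := M.maps_mem m hm
  refine cancel_right hsub hstarI (M.maps_mem _ hr'm).1 (M.maps_mem _ hlm).2.2.2 ?_
  intro b hb
  calc M.l (M.r' m) * b = M.l (M.r' m * b) := (M.l_mul _ hr'm b).symm
    _ = M.l (m * M.l' b) := by rw [← M.central' m hm b hb]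
    _ = M.l m * M.l' b := M.l_mul m hm _
    _ = M.r' (M.l m) * b := M.central' (M.l m) hlm b hb

end ExtMoritaAux
open ExtMoritaAux

/-- If the Busby–Smith twisted actions `(A,S,α,u)` and `(A,S,β,w)` are
exterior equivalent via unitary multipliers `V_s`, then they are Morita
equivalent: the maps `φ_s(a) = α_s(a)·V_s*` on the standard `A`–`A`
imprimitivity bimodule implement a Morita equivalence. -/
theorem exterior_equiv_implies_morita {S A : Type*} [InverseMonoid S]
    [CStarAlgebra A] (TA TB : TwistedAction S A)
    (E : ExteriorEquivalence S A TA TB) :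
    ∃ M : BSMoritaEquivalence S TA TB A,
      (∀ a x : A, M.bim.lsmul a x = a * x) ∧
      (∀ x b : A, M.bim.right.smul x b = x * b) ∧
      (∀ x y : A, M.bim.linner x y = x * star y) ∧
      (∀ x y : A, M.bim.right.inner x y = star x * y) ∧
      (∀ s, ∀ a ∈ TA.ideal (star s), M.φ s a = (E.V s).r' (TA.β s a)) := by
  -- basic facts about the ideals
  have hstar : ∀ s : S, ∀ a ∈ TA.ideal s, star a ∈ TA.ideal s := fun s =>
    star_mem _ (TA.ideal_closed s) (TA.ideal_mul_left s) (TA.ideal_mul_right s)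
  have hβmem : ∀ s : S, ∀ a ∈ TA.ideal (star s), TA.β s a ∈ TA.ideal s :=
    fun s a ha => (TA.β_bij s).mapsTo ha
  have hsubst : ∀ s t : S, TA.ideal (s * t) ⊆ TA.ideal s := by
    intro s t a ha
    rw [← TA.β_ideal_img s t] at ha
    obtain ⟨a₀, ⟨h1, h2⟩, rfl⟩ := ha
    exact hβmem s a₀ h1
  refine ⟨{
    bim := {
      right := {
        smul := fun x b => x * b
        add_smul' := fun x y b => add_mul x y b
        smul_add' := fun x b c => mul_add x b c
        smul_assoc' := fun x b c => mul_assoc x b c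
        smul_comm_left := fun l x b => smul_mul_assoc l x b
        smul_comm_right := fun l x b => mul_smul_comm l x b
        inner := fun x y => star x * y
        inner_add_right := fun x y z => mul_add (star x) y z
        inner_smulC_right := fun l x y => mul_smul_comm l (star x) y
        inner_smul_right := fun x y b => (mul_assoc (star x) y b).symm
        inner_star := fun x y => by rw [star_mul, star_star]
        inner_self_nonneg := fun x => ⟨x, rfl⟩
        inner_self_eq_zero := fun x h => (CStarRing.star_mul_self_eq_zero_iff x).mp h }
      lsmul := fun a x => a * x
      lsmul_add := fun a x y => mul_add a x y
      add_lsmul := fun a b x => add_mul a b x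
      lsmul_assoc := fun a b x => (mul_assoc a b x).symm
      lsmul_comm_left := fun l a x => smul_mul_assoc l a x
      lsmul_comm_right := fun l a x => mul_smul_comm l a x
      linner := fun x y => x * star y
      linner_add_left := fun x y z => add_mul x y (star z)
      linner_smulC_left := fun l x y => smul_mul_assoc l x (star y)
      linner_lsmul_left := fun a x y => mul_assoc a x (star y)
      linner_star := fun x y => by rw [star_mul, star_star]
      linner_self_nonneg := fun x => ⟨x, rfl⟩
      linner_self_eq_zero := fun x h => (CStarRing.mul_star_self_eq_zero_iff x).mp h
      bimodule := fun a x b => mul_assoc a x b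
      compat := fun x y z => mul_assoc x (star y) z }
    norm_right := ?_
    full_left := ?_
    full_right := ?_
    Xs := TA.ideal
    Xs_left := ?_
    Xs_right := ?_
    φ := fun s a => (E.V s).r' (TA.β s a)
    φ_bij := ?_
    φ_add := ?_
    φ_smulC := ?_
    φ_lsmul := ?_
    φ_rsmul := ?_
    φ_linner := ?_
    φ_rinner := ?_
    uact := fun s t => (TA.v s t).l
    uact_spec := fun s t a ha x => (TA.v s t).l_mul a ha x
    vact' := fun s t => (TB.v s t).r'
    vact'_spec := fun s t b hb x => (TB.v s t).r'_mul x b hb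
    comp_mem := ?_
    comp_dom := fun s t x hx => TA.β_comp_dom s t x hx
    comp := ?_ },
    fun a x => rfl, fun x b => rfl, fun x y => rfl, fun x y => rfl,
    fun s a _ => rfl⟩
  -- norm_right
  · intro x
    show ‖x‖ = Real.sqrt ‖star x * x‖
    rw [CStarRing.norm_star_mul_self]
    exact (Real.sqrt_mul_self (norm_nonneg x)).symm
  -- full_left
  · have hS : {a : A | ∃ x y : A, a = x * star y} = Set.univ :=
      Set.eq_univ_of_forall fun a => ⟨a, 1, by simp⟩
    rw [show {a : A | ∃ x y : A, a = x * star y} = Set.univ from hS, Submodule.span_univ]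
    exact top_le_iff.mp (Submodule.le_topologicalClosure ⊤)
  -- full_right
  · have hS : {b : A | ∃ x y : A, b = star x * y} = Set.univ :=
      Set.eq_univ_of_forall fun a => ⟨1, a, by simp⟩
    rw [show {b : A | ∃ x y : A, b = star x * y} = Set.univ from hS, Submodule.span_univ]
    exact top_le_iff.mp (Submodule.le_topologicalClosure ⊤)
  -- Xs_left
  · intro s
    ext z
    constructor
    · intro hz; exact ⟨z, hz, 1, (mul_one z).symm⟩
    · rintro ⟨a, ha, x, rfl⟩; exact TA.ideal_mul_right s x a ha
  -- Xs_right
  · intro s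
    ext z
    constructor
    · intro hz
      exact ⟨z, by rw [E.ideal_eq]; exact hz, 1, (one_mul z).symm⟩
    · rintro ⟨b, hb, x, rfl⟩
      exact TA.ideal_mul_left s x b (by rw [← E.ideal_eq]; exact hb)
  -- φ_bij
  · intro s
    refine ⟨fun a ha => ((E.V s).maps_mem _ (hβmem s a ha)).2.2.2, ?_, ?_⟩
    · intro a ha b hb h
      apply (TA.β_bij s).injOn ha hb
      have h2 := congrArg (E.V s).r h
      rwa [((E.V s).unitary_r _ (hβmem s a ha)).1,
        ((E.V s).unitary_r _ (hβmem s b hb)).1] at h2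
    · intro c hc
      obtain ⟨a, ha, haeq⟩ := (TA.β_bij s).surjOn ((E.V s).maps_mem c hc).2.1
      refine ⟨a, ha, ?_⟩
      show (E.V s).r' (TA.β s a) = c
      rw [haeq, ((E.V s).unitary_r c hc).2]
  -- φ_add
  · intro s x hx y hy
    show (E.V s).r' (TA.β s (x + y)) = (E.V s).r' (TA.β s x) + (E.V s).r' (TA.β s y)
    rw [TA.β_add s x hx y hy]
    exact ((E.V s).map_add _ (hβmem s x hx) _ (hβmem s y hy)).2.2.2
  -- φ_smulC
  · intro s l x hx
    show (E.V s).r' (TA.β s (l • x)) = l • (E.V s).r' (TA.β s x)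
    rw [TA.β_smul s l x hx]
    exact ((E.V s).map_smul l _ (hβmem s x hx)).2.2.2
  -- φ_lsmul
  · intro s a ha x hx
    show (E.V s).r' (TA.β s (a * x)) = TA.β s a * (E.V s).r' (TA.β s x)
    rw [TA.β_mul s a ha x hx]
    exact (E.V s).r'_mul (TA.β s a) _ (hβmem s x hx)
  -- φ_rsmul
  · intro s b hb x hx
    have hbA : b ∈ TA.ideal (star s) := by rw [← E.ideal_eq]; exact hb
    show (E.V s).r' (TA.β s (x * b)) = (E.V s).r' (TA.β s x) * TB.β s b
    have hbx := hβmem s x hx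
    have hbb := hβmem s b hbA
    rw [TA.β_mul s x hx b hbA, (E.V s).r'_mul (TA.β s x) _ hbb,
      E.beta_eq s b hbA,
      (E.V s).central ((E.V s).r' (TA.β s x)) (((E.V s).maps_mem _ hbx).2.2.2)
        ((E.V s).r' (TA.β s b)) (((E.V s).maps_mem _ hbb).2.2.2),
      ((E.V s).unitary_r _ hbx).1]
  -- φ_linner
  · intro s x hx y hy
    show TA.β s (x * star y) = (E.V s).r' (TA.β s x) * star ((E.V s).r' (TA.β s y))
    have hbx := hβmem s x hx
    have hby := hβmem s y hy
    rw [um_star_r' (E.V s) (hstar s) _ hby,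
      (E.V s).central ((E.V s).r' (TA.β s x)) (((E.V s).maps_mem _ hbx).2.2.2)
        (star (TA.β s y)) (hstar s _ hby),
      ((E.V s).unitary_r _ hbx).1,
      TA.β_mul s x hx (star y) (hstar (star s) y hy), TA.β_star s y hy]
  -- φ_rinner
  · intro s x hx y hy
    show TB.β s (star x * y) = star ((E.V s).r' (TA.β s x)) * (E.V s).r' (TA.β s y)
    have hbx := hβmem s x hx
    have hby := hβmem s y hy
    have hmem : star x * y ∈ TA.ideal (star s) := TA.ideal_mul_left (star s) (star x) y hy
    rw [E.beta_eq s _ hmem, TA.β_mul s (star x) (hstar (star s) x hx) y hy,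
      TA.β_star s x hx,
      um_star_r' (E.V s) (hstar s) _ hbx,
      ← (E.V s).l_mul (star (TA.β s x)) (hstar s _ hbx) ((E.V s).r' (TA.β s y)),
      ← (E.V s).r'_mul (star (TA.β s x)) _ hby]
  -- comp_mem
  · intro s t x hx
    show (E.V t).r' (TA.β t x) ∈ TA.ideal (star s) ↔ x ∈ TA.ideal (star (s * t))
    rw [← TA.β_comp_mem s t x hx]
    have hbx := hβmem t x hx
    constructor
    · intro h
      have h2 := (um_preserve (E.V t) (hstar t) (TA.ideal (star s))
        (TA.ideal_closed _) (TA.ideal_mul_left _) (TA.ideal_mul_right _)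
        ((E.V t).r' (TA.β t x)) (((E.V t).maps_mem _ hbx).2.2.2) h).2.1
      rwa [((E.V t).unitary_r _ hbx).1] at h2
    · intro h
      exact (um_preserve (E.V t) (hstar t) (TA.ideal (star s))
        (TA.ideal_closed _) (TA.ideal_mul_left _) (TA.ideal_mul_right _)
        (TA.β t x) hbx h).2.2.2
  -- comp
  · intro s t x hx
    show (E.V s).r' (TA.β s ((E.V t).r' (TA.β t x))) =
      (TA.v s t).l ((TB.v s t).r' ((E.V (s * t)).r' (TA.β (s * t) x)))
    have hxt : x ∈ TA.ideal (star t) := TA.β_comp_dom s t x hx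
    have hc : TA.β t x ∈ TA.ideal t := hβmem t x hxt
    have hcs : TA.β t x ∈ TA.ideal (star s) := (TA.β_comp_mem s t x hxt).mpr hx
    have hms : (E.V t).r' (TA.β t x) ∈ TA.ideal (star s) :=
      (um_preserve (E.V t) (hstar t) _ (TA.ideal_closed _) (TA.ideal_mul_left _)
        (TA.ideal_mul_right _) _ hc hcs).2.2.2
    have hn : TA.β s ((E.V t).r' (TA.β t x)) ∈ TA.ideal s := hβmem s _ hms
    have hp : TA.β (s * t) x ∈ TA.ideal (s * t) := hβmem (s * t) x hx
    have hz : star (TA.β (s * t) x) ∈ TA.ideal (s * t) := hstar _ _ hp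
    have hstarB : ∀ a ∈ TB.ideal (s * t), star a ∈ TB.ideal (s * t) := fun a ha =>
      star_mem _ (TB.ideal_closed _) (TB.ideal_mul_left _) (TB.ideal_mul_right _) a ha
    -- `mV s t` preserves `A_{st}`
    have hmVst : ∀ a ∈ TA.ideal (s * t), E.mV s t a ∈ TA.ideal (s * t) := by
      intro a ha
      rw [← TA.β_ideal_img s t] at ha ⊢
      obtain ⟨a₀, ⟨h1, h2⟩, rfl⟩ := ha
      rw [E.mV_spec s t a₀ ⟨h1, h2⟩]
      exact ⟨(E.V t).l a₀, ⟨(um_preserve (E.V t) (hstar t) _ (TA.ideal_closed _)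
        (TA.ideal_mul_left _) (TA.ideal_mul_right _) a₀ h2 h1).1,
        ((E.V t).maps_mem a₀ h2).1⟩, rfl⟩
    have hcanc : ∀ x' ∈ TA.ideal (s * t), ∀ y' ∈ TA.ideal (s * t),
        (∀ b ∈ TA.ideal (s * t), x' * b = y' * b) → x' = y' := fun x' hx' y' hy' h =>
      cancel_right (TA.ideal_submodule (s * t)) (hstar (s * t)) hx' hy' h
    -- `mV s t` commutes with right multiplication by `u_{s,t}*`
    have hmVcomm : ∀ m' ∈ TA.ideal (s * t),
        E.mV s t ((TA.v s t).r' m') = (TA.v s t).r' (E.mV s t m') := by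
      intro m' hm'
      have hr'm : (TA.v s t).r' m' ∈ TA.ideal (s * t) := ((TA.v s t).maps_mem m' hm').2.2.2
      refine hcanc _ (hmVst _ hr'm) _ (((TA.v s t).maps_mem _ (hmVst m' hm')).2.2.2) ?_
      intro b hb
      rw [← E.mV_mod s t ((TA.v s t).r' m') (hsubst s t hr'm) b,
        ← (TA.v s t).central' m' hm' b hb,
        E.mV_mod s t m' (hsubst s t hm') ((TA.v s t).l' b),
        (TA.v s t).central' (E.mV s t m') (hmVst m' hm') b hb]
    -- left multiplication by `V_s` commutes with right multiplication by `u_{s,t}*`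
    have hVscomm : ∀ q ∈ TA.ideal (s * t),
        (E.V s).l ((TA.v s t).r' q) = (TA.v s t).r' ((E.V s).l q) := by
      intro q hq
      have hr'q : (TA.v s t).r' q ∈ TA.ideal (s * t) := ((TA.v s t).maps_mem q hq).2.2.2
      have hlq : (E.V s).l q ∈ TA.ideal (s * t) := (um_preserve (E.V s) (hstar s) _
        (TA.ideal_closed _) (TA.ideal_mul_left _) (TA.ideal_mul_right _) q
        (hsubst s t hq) hq).1
      refine hcanc _ ((um_preserve (E.V s) (hstar s) _ (TA.ideal_closed _)
        (TA.ideal_mul_left _) (TA.ideal_mul_right _) ((TA.v s t).r' q)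
        (hsubst s t hr'q) hr'q).1) _ (((TA.v s t).maps_mem _ hlq).2.2.2) ?_
      intro b hb
      rw [← (E.V s).l_mul ((TA.v s t).r' q) (hsubst s t hr'q) b,
        ← (TA.v s t).central' q hq b hb,
        (E.V s).l_mul q (hsubst s t hq) ((TA.v s t).l' b),
        (TA.v s t).central' ((E.V s).l q) hlq b hb]
    -- memberships on the right-hand side
    have hq1 : (E.V (s * t)).r' (TA.β (s * t) x) ∈ TA.ideal (s * t) :=
      ((E.V (s * t)).maps_mem _ hp).2.2.2
    have hq1B : (E.V (s * t)).r' (TA.β (s * t) x) ∈ TB.ideal (s * t) := by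
      rw [E.ideal_eq]; exact hq1
    have hr1B : (TB.v s t).r' ((E.V (s * t)).r' (TA.β (s * t) x)) ∈ TB.ideal (s * t) :=
      ((TB.v s t).maps_mem _ hq1B).2.2.2
    have hBA : ∀ a : A, a ∈ TB.ideal (s * t) → a ∈ TA.ideal (s * t) := fun a ha => by
      rw [← E.ideal_eq]; exact ha
    have hr1A : (TB.v s t).r' ((E.V (s * t)).r' (TA.β (s * t) x)) ∈ TA.ideal (s * t) :=
      hBA _ hr1B
    apply star_injective
    have hL : star ((E.V s).r' (TA.β s ((E.V t).r' (TA.β t x)))) =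
        (TA.v s t).r' ((E.V s).l (E.mV s t ((TA.v s t).l (star (TA.β (s * t) x))))) := by
      calc star ((E.V s).r' (TA.β s ((E.V t).r' (TA.β t x))))
          = (E.V s).l (star (TA.β s ((E.V t).r' (TA.β t x)))) :=
            um_star_r' (E.V s) (hstar s) _ hn
        _ = (E.V s).l (TA.β s (star ((E.V t).r' (TA.β t x)))) := by
            rw [TA.β_star s _ hms]
        _ = (E.V s).l (TA.β s ((E.V t).l (star (TA.β t x)))) := by
            rw [um_star_r' (E.V t) (hstar t) _ hc]
        _ = (E.V s).l (E.mV s t (TA.β s (star (TA.β t x)))) := by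
            rw [E.mV_spec s t (star (TA.β t x)) ⟨hstar _ _ hcs, hstar t _ hc⟩]
        _ = (E.V s).l (E.mV s t (TA.β s (TA.β t (star x)))) := by
            rw [TA.β_star t x hxt]
        _ = (E.V s).l (E.mV s t ((TA.v s t).l ((TA.v s t).r' (TA.β (s * t) (star x))))) := by
            rw [TA.β_comp s t (star x) (hstar _ x hx)]
        _ = (E.V s).l (E.mV s t ((TA.v s t).l ((TA.v s t).r' (star (TA.β (s * t) x))))) := by
            rw [TA.β_star (s * t) x hx]
        _ = (E.V s).l (E.mV s t ((TA.v s t).r' ((TA.v s t).l (star (TA.β (s * t) x))))) := by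
            rw [um_l_r'_comm (TA.v s t) (TA.ideal_submodule (s * t)) (hstar (s * t)) _ hz]
        _ = (E.V s).l ((TA.v s t).r' (E.mV s t ((TA.v s t).l (star (TA.β (s * t) x))))) := by
            rw [hmVcomm _ (((TA.v s t).maps_mem _ hz).1)]
        _ = (TA.v s t).r' ((E.V s).l (E.mV s t ((TA.v s t).l (star (TA.β (s * t) x))))) :=
            hVscomm _ (hmVst _ (((TA.v s t).maps_mem _ hz).1))
    have hR : star ((TA.v s t).l ((TB.v s t).r' ((E.V (s * t)).r' (TA.β (s * t) x)))) =
        (TA.v s t).r' ((E.V s).l (E.mV s t ((TA.v s t).l (star (TA.β (s * t) x))))) := by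
      calc star ((TA.v s t).l ((TB.v s t).r' ((E.V (s * t)).r' (TA.β (s * t) x))))
          = (TA.v s t).r' (star ((TB.v s t).r' ((E.V (s * t)).r' (TA.β (s * t) x)))) :=
            (TA.v s t).star_l _ hr1A
        _ = (TA.v s t).r' ((TB.v s t).l (star ((E.V (s * t)).r' (TA.β (s * t) x)))) := by
            rw [um_star_r' (TB.v s t) hstarB _ hq1B]
        _ = (TA.v s t).r' ((TB.v s t).l ((E.V (s * t)).l (star (TA.β (s * t) x)))) := by
            rw [um_star_r' (E.V (s * t)) (hstar (s * t)) _ hp]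
        _ = (TA.v s t).r' ((E.V s).l (E.mV s t ((TA.v s t).l
              ((E.V (s * t)).l' ((E.V (s * t)).l (star (TA.β (s * t) x))))))) := by
            rw [E.w_eq s t ((E.V (s * t)).l (star (TA.β (s * t) x)))
              (((E.V (s * t)).maps_mem _ hz).1)]
        _ = (TA.v s t).r' ((E.V s).l (E.mV s t ((TA.v s t).l (star (TA.β (s * t) x))))) := by
            rw [((E.V (s * t)).unitary_l _ hz).2]
    rw [hL, hR]
end

section
/- Let _AX_B be an imprimitivity bimodule, π a nondegenerate representation of B on H, and π^X the induced representation of A on H^X = X ⊗_B H. Then for any closed ideal I of A, π^X(I)H^X = (I·X) ⊗_B H. -/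
/-- Rieffel induction: let `_AX_B` be an imprimitivity bimodule, `π` a
nondegenerate representation of `B` on `H`, and `π^X` the induced
representation of `A` on `H^X = X ⊗_B H` (realized as a Hilbert space `HX`
with a bilinear map `t x ξ = x ⊗ ξ` of dense span satisfying
`⟪x⊗ξ, y⊗η⟫ = ⟪ξ, π(⟨x,y⟩_B)η⟫` and `π^X(a)(x⊗ξ) = (a·x)⊗ξ`).  Then for any
closed ideal `I` of `A`, `π^X(I)H^X = (I·X) ⊗_B H`. -/
theorem induced_rep_ideal_image {A B X H HX : Type*}
    [CStarAlgebra A] [CStarAlgebra B]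
    [NormedAddCommGroup X] [NormedSpace ℂ X] [CompleteSpace X]
    [NormedAddCommGroup H] [InnerProductSpace ℂ H] [CompleteSpace H]
    [NormedAddCommGroup HX] [InnerProductSpace ℂ HX] [CompleteSpace HX]
    (bim : HilbertBimodule A B X)
    (hnorm : ∀ x : X, ‖x‖ = Real.sqrt ‖bim.right.inner x x‖)
    (hfull_left : (Submodule.span ℂ {a : A | ∃ x y : X, a = bim.linner x y}).topologicalClosure = ⊤)
    (hfull_right : (Submodule.span ℂ {b : B | ∃ x y : X, b = bim.right.inner x y}).topologicalClosure = ⊤)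
    -- `π` is a nondegenerate representation of `B` on `H`
    (π : B → H →L[ℂ] H)
    (π_add : ∀ b c, π (b + c) = π b + π c)
    (π_smul : ∀ (l : ℂ) b, π (l • b) = l • π b)
    (π_mul : ∀ b c, π (b * c) = (π b).comp (π c))
    (π_star : ∀ b, π (star b) = ContinuousLinearMap.adjoint (π b))
    (π_nondeg : (Submodule.span ℂ {ξ : H | ∃ b η, ξ = π b η}).topologicalClosure = ⊤)
    -- `HX` realizes `X ⊗_B H`
    (t : X → H → HX)
    (t_add_left : ∀ x y ξ, t (x + y) ξ = t x ξ + t y ξ)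
    (t_add_right : ∀ x ξ η, t x (ξ + η) = t x ξ + t x η)
    (t_smulC : ∀ (l : ℂ) x ξ, t (l • x) ξ = l • t x ξ ∧ t x (l • ξ) = l • t x ξ)
    (t_inner : ∀ x y ξ η, (inner ℂ (t x ξ) (t y η) : ℂ) = inner ℂ ξ (π (bim.right.inner x y) η))
    (t_dense : (Submodule.span ℂ {h : HX | ∃ x ξ, h = t x ξ}).topologicalClosure = ⊤)
    -- the induced representation `π^X` of `A` on `HX`
    (πX : A → HX →L[ℂ] HX)
    (πX_spec : ∀ a x ξ, πX a (t x ξ) = t (bim.lsmul a x) ξ)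
    -- a closed ideal `I` of `A`
    (I : Set A) (hI : ∃ J : Submodule ℂ A, (J : Set A) = I) (hIclosed : IsClosed I)
    (hIl : ∀ (a : A), ∀ b ∈ I, a * b ∈ I) (hIr : ∀ (b : A), ∀ a ∈ I, a * b ∈ I) :
    (Submodule.span ℂ {h : HX | ∃ a ∈ I, ∃ k, h = πX a k}).topologicalClosure
      = (Submodule.span ℂ {h : HX | ∃ a ∈ I, ∃ x ξ, h = t (bim.lsmul a x) ξ}).topologicalClosure := by
  apply le_antisymm
  · refine Submodule.topologicalClosure_minimal _ ?_
      (Submodule.isClosed_topologicalClosure _)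
    rw [Submodule.span_le]
    rintro h ⟨a, haI, k, rfl⟩
    set S : Submodule ℂ HX :=
      Submodule.span ℂ {h : HX | ∃ a ∈ I, ∃ x ξ, h = t (bim.lsmul a x) ξ} with hS
    have hk : k ∈ closure ((Submodule.span ℂ {h : HX | ∃ x ξ, h = t x ξ}) : Set HX) := by
      have : k ∈ ((Submodule.span ℂ {h : HX | ∃ x ξ, h = t x ξ}).topologicalClosure : Set HX) := by
        rw [t_dense]; trivial
      simpa [Submodule.topologicalClosure_coe] using this
    have hmap : Set.MapsTo (πX a)
        ((Submodule.span ℂ {h : HX | ∃ x ξ, h = t x ξ}) : Set HX) (S : Set HX) := by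
      intro v hv
      induction hv using Submodule.span_induction with
      | mem w hw =>
        obtain ⟨x, ξ, rfl⟩ := hw
        exact Submodule.subset_span ⟨a, haI, x, ξ, πX_spec a x ξ⟩
      | zero => simpa using S.zero_mem
      | add u v _ _ hu hv => simpa using S.add_mem hu hv
      | smul c u _ hu => simpa using S.smul_mem c hu
    have := (hmap.closure (πX a).continuous) hk
    have hmem : πX a k ∈ closure (S : Set HX) := this
    simpa [Submodule.topologicalClosure_coe] using hmem
  · apply Submodule.topologicalClosure_mono
    rw [Submodule.span_le]
    rintro h ⟨a, haI, x, ξ, rfl⟩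
    exact Submodule.subset_span ⟨a, haI, t x ξ, (πX_spec a x ξ).symm⟩
end
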